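/- Let x1, x0 be Bessel sequences in X and u0 a Bessel sequence in U with synthesis operators Ξ1, Ξ0, Υ0, and suppose the data-generation assumption holds. If K ∈ L(X,U) satisfies Σ_is ⊆ Σ_{K,M,γ} for some constants M ≥ 1 and γ > 0, then for every x ∈ X the vector (x, Kx) ∈ X×U lies in the closure of the range of the operator H ∈ L(ℓ²(ℕ), X×U) given by Hw = (Ξ0 w, Υ0 w). -/

import Mathlib

noncomputable section

/-- `ℓ²(ℕ)`: the Hilbert space of square-summable complex sequences. -/
abbrev l2 : Type := lp (fun _ : ℕ => ℂ) 2

/-- `η` is a Bessel sequence in `Y`. -/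
def Bessel {Y : Type} [NormedAddCommGroup Y] [InnerProductSpace ℂ Y] (η : ℕ → Y) : Prop :=
  ∃ α : ℝ, 0 < α ∧ ∀ y : Y, ∑' k : ℕ, ‖(inner ℂ y (η k) : ℂ)‖ ^ 2 ≤ α * ‖y‖ ^ 2

/-- `T` is the synthesis operator associated with `η`: `T w = ∑ₖ wₖ • ηₖ`. -/
def IsSynthesis {Y : Type} [NormedAddCommGroup Y] [InnerProductSpace ℂ Y] (η : ℕ → Y)
    (T : l2 →L[ℂ] Y) : Prop :=
  ∀ w : l2, HasSum (fun k : ℕ => w k • η k) (T w)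

/-- Auxiliary: a synthesis operator sends the canonical basis vectors to the sequence. -/
lemma synthesis_single {Y : Type} [NormedAddCommGroup Y] [InnerProductSpace ℂ Y] (η : ℕ → Y)
    (T : l2 →L[ℂ] Y) (hT : IsSynthesis η T) (k : ℕ) : T (lp.single 2 k 1) = η k := by
  have hfun : (fun j : ℕ => ((lp.single 2 k (1 : ℂ) : l2) j) • η j)
      = fun j => if j = k then η k else 0 := by
    funext j
    by_cases h : j = k
    · subst h; simp [lp.single_apply_self]
    · simp [lp.single_apply_ne 2 k _ h, h]
  have h2 : HasSum (fun j : ℕ => ((lp.single 2 k (1 : ℂ) : l2) j) • η j) (η k) := by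
    rw [hfun]; exact hasSum_ite_eq k (η k)
  exact (hT _).unique h2

theorem stmt_2
    {X : Type} [NormedAddCommGroup X] [InnerProductSpace ℂ X] [CompleteSpace X] [Nontrivial X]
    {U : Type} [NormedAddCommGroup U] [InnerProductSpace ℂ U] [CompleteSpace U] [Nontrivial U]
    (x1 x0 : ℕ → X) (u0 : ℕ → U)
    (hx1B : Bessel x1) (hx0B : Bessel x0) (hu0B : Bessel u0)
    (Ξ1 Ξ0 : l2 →L[ℂ] X) (Υ0 : l2 →L[ℂ] U)
    (hΞ1 : IsSynthesis x1 Ξ1) (hΞ0 : IsSynthesis x0 Ξ0) (hΥ0 : IsSynthesis u0 Υ0)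
    (As : X →L[ℂ] X) (Bs : U →L[ℂ] X)
    (hgen : ∀ k : ℕ, x1 k = As (x0 k) + Bs (u0 k))
    (K : X →L[ℂ] U) (M γ : ℝ) (hM : 1 ≤ M) (hγ : 0 < γ)
    (hsub : ∀ (A : X →L[ℂ] X) (B : U →L[ℂ] X),
      (∀ k : ℕ, x1 k = A (x0 k) + B (u0 k)) →
      ∀ k : ℕ, ‖(A + B.comp K) ^ k‖ ≤ M * γ ^ k) :
    ∀ x : X, ((x, K x) : X × U) ∈ closure (Set.range fun w : l2 => ((Ξ0 w, Υ0 w) : X × U)) := by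
  classical
  intro x
  -- Work in the L² product space, which carries an inner product and has the same topology.
  set e : WithLp 2 (X × U) ≃L[ℂ] X × U := WithLp.prodContinuousLinearEquiv 2 ℂ X U with he
  set H : l2 →L[ℂ] WithLp 2 (X × U) :=
    (e.symm : (X × U) →L[ℂ] WithLp 2 (X × U)).comp (Ξ0.prod Υ0) with hHdef
  set S : Submodule ℂ (WithLp 2 (X × U)) := LinearMap.range (H : l2 →ₗ[ℂ] WithLp 2 (X × U)) with hSdef
  -- reduce to a closure statement in `WithLp 2 (X × U)`
  have hmain : e.symm (x, K x) ∈ closure (S : Set (WithLp 2 (X × U))) → 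
      ((x, K x) : X × U) ∈ closure (Set.range fun w : l2 => ((Ξ0 w, Υ0 w) : X × U)) := by
    intro h
    have himg : e '' (S : Set (WithLp 2 (X × U)))
        = Set.range fun w : l2 => ((Ξ0 w, Υ0 w) : X × U) := by
      ext p
      constructor
      · rintro ⟨q, ⟨w, rfl⟩, rfl⟩
        exact ⟨w, by simp [hHdef]⟩
      · rintro ⟨w, rfl⟩
        exact ⟨H w, ⟨w, rfl⟩, by simp [hHdef]⟩
    have := e.toHomeomorph.image_closure (S : Set (WithLp 2 (X × U)))
    rw [show ⇑e.toHomeomorph = ⇑e from rfl] at this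
    have hx' : e (e.symm (x, K x)) ∈ e '' closure (S : Set (WithLp 2 (X × U))) :=
      Set.mem_image_of_mem _ h
    rw [this, himg] at hx'
    simpa using hx'
  apply hmain
  -- Now use the orthogonal complement characterization of the closure.
  rw [← Submodule.topologicalClosure_coe, ← Submodule.orthogonal_orthogonal_eq_closure]
  rw [SetLike.mem_coe, Submodule.mem_orthogonal]
  rintro ⟨⟨z, v⟩⟩ hp
  rw [Submodule.mem_orthogonal] at hp
  -- orthogonality against the data
  have hk : ∀ k : ℕ, (inner ℂ (x0 k) z : ℂ) + inner ℂ (u0 k) v = 0 := by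
    intro k
    have hmem : e.symm ((x0 k, u0 k) : X × U) ∈ S := by
      refine ⟨lp.single 2 k 1, ?_⟩
      simp [hHdef, synthesis_single x0 Ξ0 hΞ0 k, synthesis_single u0 Υ0 hΥ0 k]
    have := hp _ hmem
    simpa [WithLp.prod_inner_apply, he, WithLp.prodContinuousLinearEquiv_symm_apply] using this
  -- the perturbation direction
  set c : X := z + (ContinuousLinearMap.adjoint K) v with hc
  set D : X →L[ℂ] X := As + Bs.comp K with hD
  -- every rank-one perturbation along `c` stays bounded in norm
  have hbound : ∀ ξ : X, ‖D + (innerSL ℂ c).smulRight ξ‖ ≤ M * γ := by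
    intro ξ
    have hdata : ∀ k : ℕ, x1 k = (As + (innerSL ℂ z).smulRight ξ) (x0 k)
        + (Bs + (innerSL ℂ v).smulRight ξ) (u0 k) := by
      intro k
      have h0 : (inner ℂ z (x0 k) : ℂ) + inner ℂ v (u0 k) = 0 := by
        have := congrArg (starRingEnd ℂ) (hk k)
        simpa [inner_conj_symm] using this
      simp only [ContinuousLinearMap.add_apply, ContinuousLinearMap.smulRight_apply,
        innerSL_apply_apply, hgen k]
      rw [show As (x0 k) + (inner ℂ z (x0 k) : ℂ) • ξ + (Bs (u0 k) + (inner ℂ v (u0 k) : ℂ) • ξ)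
          = As (x0 k) + Bs (u0 k) + ((inner ℂ z (x0 k) : ℂ) + inner ℂ v (u0 k)) • ξ by
        rw [add_smul]; abel]
      rw [h0, zero_smul, add_zero]
    have heq : (As + (innerSL ℂ z).smulRight ξ)
        + (Bs + (innerSL ℂ v).smulRight ξ).comp K = D + (innerSL ℂ c).smulRight ξ := by
      ext y
      simp only [ContinuousLinearMap.add_apply, ContinuousLinearMap.comp_apply,
        ContinuousLinearMap.smulRight_apply, innerSL_apply_apply, hD, hc, inner_add_left,
        ContinuousLinearMap.adjoint_inner_left, add_smul]
      abel
    have := hsub _ _ hdata 1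
    rw [pow_one, heq] at this
    simpa using this
  -- the rank-one part is uniformly bounded, forcing `c = 0`
  have hc0 : c = 0 := by
    by_contra hcne
    have hcpos : (0 : ℝ) < ‖c‖ := norm_pos_iff.mpr hcne
    set B : ℝ := M * γ + ‖D‖ with hB
    have hBpos : 0 < B := by positivity
    set r : ℝ := (B + 1) / ‖c‖ ^ 2 with hr
    have hrpos : 0 < r := by positivity
    have h1 : ‖(innerSL ℂ c).smulRight (r • c)‖ ≤ B := by
      have h2 := hbound (r • c)
      calc ‖(innerSL ℂ c).smulRight (r • c)‖
          = ‖(D + (innerSL ℂ c).smulRight (r • c)) - D‖ := by rw [add_sub_cancel_left]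
        _ ≤ ‖D + (innerSL ℂ c).smulRight (r • c)‖ + ‖D‖ := norm_sub_le _ _
        _ ≤ M * γ + ‖D‖ := by linarith
    have h3 : ‖((innerSL ℂ c).smulRight (r • c)) c‖ ≤ B * ‖c‖ :=
      le_trans (((innerSL ℂ c).smulRight (r • c)).le_opNorm c)
        (by exact mul_le_mul_of_nonneg_right h1 (norm_nonneg c))
    have h4 : ‖((innerSL ℂ c).smulRight (r • c)) c‖ = ‖c‖ ^ 2 * (r * ‖c‖) := by
      simp only [ContinuousLinearMap.smulRight_apply, innerSL_apply_apply]
      rw [norm_smul, norm_smul, inner_self_eq_norm_sq_to_K (𝕜 := ℂ)]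
      simp [abs_of_pos hrpos]
    rw [h4] at h3
    have h5 : ‖c‖ ^ 2 * r = B + 1 := by
      rw [hr]; field_simp [hcpos.ne']
    have h9 : (B + 1) * ‖c‖ ≤ B * ‖c‖ := by
      calc (B + 1) * ‖c‖ = ‖c‖ ^ 2 * r * ‖c‖ := by rw [h5]
        _ = ‖c‖ ^ 2 * (r * ‖c‖) := by ring
        _ ≤ B * ‖c‖ := h3
    have h10 : B * ‖c‖ < (B + 1) * ‖c‖ := by
      have := mul_lt_mul_of_pos_right (lt_add_one B) hcpos
      linarith
    linarith
  -- conclude the orthogonality of `(x, Kx)` to `(z, v)`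
  rw [WithLp.prod_inner_apply]
  have h6 : (inner ℂ z x : ℂ) + inner ℂ v (K x)
      = inner ℂ c x := by
    rw [hc, inner_add_left, ContinuousLinearMap.adjoint_inner_left]
  have h7 : (WithLp.ofLp (e.symm ((x, K x) : X × U))).fst = x := rfl
  have h8 : (WithLp.ofLp (e.symm ((x, K x) : X × U))).snd = K x := rfl
  rw [h7, h8, h6, hc0, inner_zero_left]
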